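/- The subspace of (ℂ²)^⊗n spanned by all graph states on n labeled vertices (equivalently all subgraph states of the complete graph K_n) has dimension 2^n − n. -/

import Mathlib

open scoped BigOperators

/-- The graph state amplitude function for edge set `E` on `n` qubits:
`|G⟩ = ∏ CZ |+⟩^⊗n`, whose amplitude on a computational basis state `x` is
`2^(-n/2)` times `(-1)` for every edge both of whose endpoints are in state `1`. -/
noncomputable def gs (n : ℕ) (E : Finset (Sym2 (Fin n))) : (Fin n → Fin 2) → ℂ :=
  fun x => ((Real.sqrt 2)⁻¹ : ℝ) ^ n *
    ∏ e ∈ E, (if ∀ i ∈ e, x i = 1 then (-1 : ℂ) else 1)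

/-- Inner product `⟨v|w⟩` on the `n`-qubit state space. -/
noncomputable def ip {n : ℕ} (v w : (Fin n → Fin 2) → ℂ) : ℂ :=
  ∑ x, (starRingEnd ℂ) (v x) * w x

/-- The edge set of the complete graph on `n` labeled vertices. -/
def completeEdges (n : ℕ) : Finset (Sym2 (Fin n)) :=
  Finset.univ.filter fun e => ¬ e.IsDiag

namespace GSAux

/-- weight at most one -/
def low {n : ℕ} (x : Fin n → Fin 2) : Prop := ∀ i j, x i = 1 → x j = 1 → i = j

def unitv {n : ℕ} (i : Fin n) : Fin n → Fin 2 := fun j => if j = i then 1 else 0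

noncomputable def cst (n : ℕ) : ℂ := ((Real.sqrt 2)⁻¹ : ℝ) ^ n

def sx {n : ℕ} (x : Fin n → Fin 2) : Finset (Sym2 (Fin n)) :=
  (completeEdges n).filter (fun e => ∀ i ∈ e, x i = 1)

def pt {n : ℕ} (T : Finset (Sym2 (Fin n))) : Fin n → Fin 2 :=
  fun i => if ∃ e ∈ T, i ∈ e then 1 else 0

noncomputable def D {n : ℕ} (T : Finset (Sym2 (Fin n))) : (Fin n → Fin 2) → ℂ :=
  fun x => if sx x = T then 1 else 0

noncomputable def L (n : ℕ) : ((Fin n → Fin 2) → ℂ) →ₗ[ℂ] (Fin n → ℂ) where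
  toFun f := fun i => f (unitv i) - f (fun _ => 0)
  map_add' := by intro f g; funext i; simp [Pi.add_apply]; ring
  map_smul' := by intro a f; funext i; simp [Pi.smul_apply, smul_eq_mul]; ring

lemma fin2_cases (a : Fin 2) : a = 0 ∨ a = 1 := by revert a; decide

lemma low_unitv {n : ℕ} (i : Fin n) : low (unitv i) := by
  intro a b ha hb
  unfold unitv at ha hb
  by_cases h1 : a = i
  · by_cases h2 : b = i
    · rw [h1, h2]
    · rw [if_neg h2] at hb; exact absurd hb (by decide)
  · rw [if_neg h1] at ha; exact absurd ha (by decide)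

lemma low_zero {n : ℕ} : low (fun _ : Fin n => (0 : Fin 2)) := by
  intro a b ha _; simp at ha

lemma unitv_ne_zero {n : ℕ} (i : Fin n) : unitv i ≠ (fun _ => (0 : Fin 2)) := by
  intro h
  have := congrFun h i
  rw [unitv] at this
  rw [if_pos rfl] at this
  exact absurd this (by decide)

lemma low_eq {n : ℕ} {x : Fin n → Fin 2} (hx : low x) :
    x = (fun _ => 0) ∨ ∃ i, x = unitv i := by
  by_cases h : ∃ i, x i = 1
  · obtain ⟨i, hi⟩ := h
    refine Or.inr ⟨i, funext fun j => ?_⟩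
    show x j = if j = i then 1 else 0
    rcases eq_or_ne j i with rfl | hji
    · rw [if_pos rfl, hi]
    · rw [if_neg hji]
      rcases fin2_cases (x j) with h0 | h1
      · exact h0
      · exact absurd (hx j i h1 hi) hji
  · refine Or.inl (funext fun j => ?_)
    push_neg at h
    rcases fin2_cases (x j) with h0 | h1
    · exact h0
    · exact absurd h1 (h j)

lemma mem_ker_iff {n : ℕ} (f : (Fin n → Fin 2) → ℂ) :
    f ∈ LinearMap.ker (L n) ↔ ∀ x, low x → f x = f (fun _ => 0) := by
  rw [LinearMap.mem_ker]
  constructor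
  · intro hf x hx
    have h : ∀ i, f (unitv i) - f (fun _ => 0) = 0 := fun i => congrFun hf i
    rcases low_eq hx with h0 | ⟨i, hi⟩
    · rw [h0]
    · rw [hi]; exact sub_eq_zero.mp (h i)
  · intro hf
    funext i
    show f (unitv i) - f (fun _ => 0) = 0
    rw [hf (unitv i) (low_unitv i), sub_self]

lemma L_surjective (n : ℕ) : Function.Surjective (L n) := by
  intro g
  refine ⟨fun x => ∑ i, if x = unitv i then g i else 0, ?_⟩
  funext j
  show (∑ i, if unitv j = unitv i then g i else 0)
      - (∑ i, if (fun _ => (0:Fin 2)) = unitv i then g i else 0) = g j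
  have h1 : ∀ i : Fin n, (unitv j = unitv i) ↔ j = i := by
    intro i
    constructor
    · intro h
      by_contra hji
      have h' := congrFun h j
      rw [show unitv j j = 1 from if_pos rfl, show unitv i j = 0 from if_neg hji] at h'
      exact absurd h' (by decide)
    · rintro rfl; rfl
  have h2 : (∑ i, if unitv j = unitv i then g i else 0) = g j := by
    rw [Finset.sum_congr rfl (fun i _ => by rw [if_congr (h1 i) rfl rfl])]
    simp
  have h3 : (∑ i, if (fun _ => (0:Fin 2)) = unitv i then g i else 0) = 0 := by
    apply Finset.sum_eq_zero
    intro i _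
    rw [if_neg (fun h => unitv_ne_zero i h.symm)]
  rw [h2, h3, sub_zero]

lemma finrank_ker (n : ℕ) :
    Module.finrank ℂ (LinearMap.ker (L n)) = 2 ^ n - n := by
  have h2 := LinearMap.finrank_range_add_finrank_ker (L n)
  have h3 : Module.finrank ℂ ((Fin n → Fin 2) → ℂ) = 2 ^ n := by
    rw [Module.finrank_pi, Fintype.card_fun]; simp
  have h1 : Module.finrank ℂ (LinearMap.range (L n)) = n := by
    rw [LinearMap.range_eq_top.2 (L_surjective n), finrank_top, Module.finrank_pi,
      Fintype.card_fin]
  rw [h1, h3] at h2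
  omega

lemma cst_ne_zero (n : ℕ) : cst n ≠ 0 := by
  unfold cst
  apply pow_ne_zero
  simp only [ne_eq, Complex.ofReal_eq_zero, inv_eq_zero]
  positivity

lemma gs_apply {n : ℕ} {E : Finset (Sym2 (Fin n))} (hE : E ⊆ completeEdges n)
    (x : Fin n → Fin 2) :
    gs n E x = cst n * ∏ e ∈ E, (if e ∈ sx x then (-1 : ℂ) else 1) := by
  unfold gs cst
  push_cast
  congr 1
  refine Finset.prod_congr rfl fun e he => ?_
  have : (∀ i ∈ e, x i = 1) ↔ e ∈ sx x := by
    rw [sx, Finset.mem_filter]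
    exact ⟨fun h => ⟨hE he, h⟩, fun h => h.2⟩
  rw [if_congr this rfl rfl]

lemma ne_diag_exists {n : ℕ} {e : Sym2 (Fin n)} (he : e ∈ completeEdges n) :
    ∃ a b : Fin n, a ≠ b ∧ e = s(a, b) := by
  rw [completeEdges, Finset.mem_filter] at he
  induction e using Sym2.ind with
  | _ a b =>
    exact ⟨a, b, by simpa using he.2, rfl⟩

lemma sx_low {n : ℕ} {x : Fin n → Fin 2} (hx : low x) : sx x = ∅ := by
  rw [Finset.eq_empty_iff_forall_notMem]
  intro e he
  rw [sx, Finset.mem_filter] at he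
  obtain ⟨a, b, hab, rfl⟩ := ne_diag_exists he.1
  exact hab (hx a b (he.2 a (by simp)) (he.2 b (by simp)))

lemma gs_low {n : ℕ} {E : Finset (Sym2 (Fin n))} (hE : E ⊆ completeEdges n)
    {x : Fin n → Fin 2} (hx : low x) : gs n E x = cst n := by
  rw [gs_apply hE, sx_low hx]
  simp

lemma sx_subset {n : ℕ} (x : Fin n → Fin 2) : sx x ⊆ completeEdges n :=
  Finset.filter_subset _ _

/-- Claim A: the Fourier-type sum of graph states gives indicators of fibers. -/
lemma claimA {n : ℕ} {T : Finset (Sym2 (Fin n))} (hT : T ⊆ completeEdges n)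
    (x : Fin n → Fin 2) :
    ∑ E ∈ (completeEdges n).powerset,
        (∏ e ∈ E, (if e ∈ T then (-1 : ℂ) else 1)) * gs n E x
      = (cst n * 2 ^ (completeEdges n).card) * D T x := by
  have hrw : ∀ E ∈ (completeEdges n).powerset,
      (∏ e ∈ E, (if e ∈ T then (-1 : ℂ) else 1)) * gs n E x
        = cst n * ∏ e ∈ E,
            ((if e ∈ T then (-1 : ℂ) else 1) * (if e ∈ sx x then (-1 : ℂ) else 1)) := by
    intro E hE
    rw [gs_apply (Finset.mem_powerset.mp hE), Finset.prod_mul_distrib]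
    ring
  rw [Finset.sum_congr rfl hrw, ← Finset.mul_sum]
  set h : Sym2 (Fin n) → ℂ :=
    fun e => (if e ∈ T then (-1 : ℂ) else 1) * (if e ∈ sx x then (-1 : ℂ) else 1) with hh
  have key : ∑ E ∈ (completeEdges n).powerset, ∏ e ∈ E, h e
      = ∏ e ∈ completeEdges n, (h e + 1) := by
    rw [Finset.prod_add]
    simp
  rw [key]
  by_cases hx : sx x = T
  · have : ∀ e ∈ completeEdges n, h e + 1 = 2 := by
      intro e _
      show ((if e ∈ T then (-1 : ℂ) else 1) * (if e ∈ sx x then (-1 : ℂ) else 1)) + 1 = 2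
      rw [hx]
      by_cases heT : e ∈ T <;> simp [heT] <;> norm_num
    rw [Finset.prod_congr rfl this, Finset.prod_const, D, if_pos hx]
    ring
  · have : ∃ e ∈ completeEdges n, h e + 1 = 0 := by
      have : ∃ e, (e ∈ sx x) ≠ (e ∈ T) := by
        by_contra hc
        push_neg at hc
        exact hx (Finset.ext fun e => by rw [hc e])
      obtain ⟨e, he⟩ := this
      by_cases h1 : e ∈ sx x
      · have h2 : e ∉ T := fun h2 => he (by simp [h1, h2])
        exact ⟨e, sx_subset x h1, by simp [hh, h1, h2]⟩
      · have h2 : e ∈ T := by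
          by_contra h2
          exact he (by simp [h1, h2])
        exact ⟨e, hT h2, by simp [hh, h1, h2]⟩
    obtain ⟨e, he, h0⟩ := this
    rw [Finset.prod_eq_zero he h0, D, if_neg hx]
    ring

lemma D_mem_span {n : ℕ} {T : Finset (Sym2 (Fin n))} (hT : T ⊆ completeEdges n) :
    D T ∈ Submodule.span ℂ
      (Set.range fun E : {E : Finset (Sym2 (Fin n)) // E ⊆ completeEdges n} => gs n E.1) := by
  have hne : (cst n * 2 ^ (completeEdges n).card : ℂ) ≠ 0 := by
    exact mul_ne_zero (cst_ne_zero n) (pow_ne_zero _ two_ne_zero)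
  have heq : D T = (cst n * 2 ^ (completeEdges n).card)⁻¹ •
      ∑ E ∈ (completeEdges n).powerset,
        (∏ e ∈ E, (if e ∈ T then (-1 : ℂ) else 1)) • gs n E := by
    funext x
    simp only [Pi.smul_apply, Finset.sum_apply, smul_eq_mul]
    rw [claimA hT x, inv_mul_cancel_left₀ hne]
  rw [heq]
  apply Submodule.smul_mem
  apply Submodule.sum_mem
  intro E hE
  apply Submodule.smul_mem
  exact Submodule.subset_span ⟨⟨E, Finset.mem_powerset.mp hE⟩, rfl⟩

lemma pt_empty {n : ℕ} : pt (∅ : Finset (Sym2 (Fin n))) = fun _ => 0 := by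
  funext i
  simp [pt]

lemma pt_sx {n : ℕ} {x : Fin n → Fin 2} (hx : ¬ low x) : pt (sx x) = x := by
  unfold low at hx
  push_neg at hx
  obtain ⟨i, j, hi, hj, hij⟩ := hx
  funext k
  rcases fin2_cases (x k) with h0 | h1
  · rw [h0, pt, if_neg]
    rintro ⟨e, he, hke⟩
    rw [sx, Finset.mem_filter] at he
    have := he.2 k hke
    rw [this] at h0
    exact absurd h0 (by simp)
  · rw [h1, pt, if_pos]
    obtain ⟨a, ha, hak⟩ : ∃ a, x a = 1 ∧ a ≠ k := by
      rcases eq_or_ne i k with h | h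
      · exact ⟨j, hj, fun hjk => hij (by rw [h, hjk])⟩
      · exact ⟨i, hi, h⟩
    refine ⟨s(k, a), ?_, by simp⟩
    rw [sx, Finset.mem_filter]
    constructor
    · rw [completeEdges, Finset.mem_filter]
      exact ⟨Finset.mem_univ _, by simp [Ne.symm hak]⟩
    · intro m hm
      rw [Sym2.mem_iff] at hm
      rcases hm with rfl | rfl
      · exact h1
      · exact ha

lemma claimC {n : ℕ} (f : (Fin n → Fin 2) → ℂ)
    (hf : ∀ x, low x → f x = f (fun _ => 0)) :
    f = ∑ T ∈ (completeEdges n).powerset, f (pt T) • D T := by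
  funext x
  rw [Finset.sum_apply]
  have hrw : ∀ T ∈ (completeEdges n).powerset,
      (f (pt T) • D T) x = if sx x = T then f (pt T) else 0 := by
    intro T _
    simp only [Pi.smul_apply, smul_eq_mul, D]
    by_cases h : sx x = T <;> simp [h]
  rw [Finset.sum_congr rfl hrw, Finset.sum_ite_eq,
    if_pos (Finset.mem_powerset.mpr (sx_subset x))]
  by_cases hx : low x
  · rw [sx_low hx, pt_empty, ← hf x hx]
  · rw [pt_sx hx]

end GSAux

/-- the subspace of the n-qubit state space spanned by all graph states
on n labeled vertices has dimension 2^n - n. -/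
theorem dim_span_graph_states (n : ℕ) :
    Module.finrank ℂ
      (Submodule.span ℂ
        (Set.range fun E : {E : Finset (Sym2 (Fin n)) // E ⊆ completeEdges n} => gs n E.1))
      = 2 ^ n - n := by
  have hspan : Submodule.span ℂ
      (Set.range fun E : {E : Finset (Sym2 (Fin n)) // E ⊆ completeEdges n} => gs n E.1)
      = LinearMap.ker (GSAux.L n) := by
    apply le_antisymm
    · rw [Submodule.span_le]
      rintro _ ⟨⟨E, hE⟩, rfl⟩
      rw [SetLike.mem_coe, GSAux.mem_ker_iff]
      intro x hx
      show gs n E x = gs n E (fun _ => 0)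
      rw [GSAux.gs_low hE hx, GSAux.gs_low hE GSAux.low_zero]
    · intro f hf
      rw [GSAux.mem_ker_iff] at hf
      rw [GSAux.claimC f hf]
      exact Submodule.sum_mem _ fun T hT =>
        Submodule.smul_mem _ _ (GSAux.D_mem_span (Finset.mem_powerset.mp hT))
  rw [hspan, GSAux.finrank_ker]
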